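/- Matrix lemma (Lemma 2.10). Let A and B be n×n real symmetric matrices with A positive definite, and let c₁, c₂, c₃, c₄ be positive constants such that (1/c₁)·I ≤ A ≤ c₂·I, B ≥ −c₃·I, and trace(AB) ≤ c₄. Then B ≤ c₁((n−1)c₂c₃ + c₄)·I. -/

import Mathlib

open Matrix

theorem matrix_lemma (n : ℕ) (A B : Matrix (Fin n) (Fin n) ℝ)
    (hAsymm : A.IsSymm) (hBsymm : B.IsSymm) (hApos : A.PosDef)
    (c₁ c₂ c₃ c₄ : ℝ) (hc₁ : 0 < c₁) (hc₂ : 0 < c₂) (hc₃ : 0 < c₃) (hc₄ : 0 < c₄)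
    (hA_lower : (A - (1 / c₁) • (1 : Matrix (Fin n) (Fin n) ℝ)).PosSemidef)
    (hA_upper : (c₂ • (1 : Matrix (Fin n) (Fin n) ℝ) - A).PosSemidef)
    (hB_lower : (B + c₃ • (1 : Matrix (Fin n) (Fin n) ℝ)).PosSemidef)
    (htrace : (A * B).trace ≤ c₄) :
    ((c₁ * (((n : ℝ) - 1) * c₂ * c₃ + c₄)) • (1 : Matrix (Fin n) (Fin n) ℝ)
        - B).PosSemidef := by
  classical
  -- B is Hermitian
  have hB : B.IsHermitian := by
    rw [Matrix.IsHermitian, Matrix.conjTranspose_eq_transpose_of_trivial]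
    exact hBsymm
  set U : Matrix (Fin n) (Fin n) ℝ := (hB.eigenvectorUnitary : Matrix (Fin n) (Fin n) ℝ) with hU
  set μ : Fin n → ℝ := hB.eigenvalues with hμ
  have hUU : star U * U = 1 := Unitary.coe_star_mul_self hB.eigenvectorUnitary
  have hUU' : U * star U = 1 := Unitary.coe_mul_star_self hB.eigenvectorUnitary
  have hdiagμ : diagonal (RCLike.ofReal ∘ μ) = diagonal μ := by
    congr 1
  have hspec : B = U * diagonal μ * star U := by
    rw [← hdiagμ]; exact hB.spectral_theorem
  -- diagonal entries of PSD matrices are nonneg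
  have diag_nonneg : ∀ (M : Matrix (Fin n) (Fin n) ℝ), M.PosSemidef → ∀ i, 0 ≤ M i i := by
    intro M hM i
    have := hM.dotProduct_mulVec_nonneg (Pi.single i 1)
    simpa [dotProduct, Matrix.mulVec, Pi.single_apply, Finset.sum_ite_eq] using this
  -- the conjugated A
  set A' : Matrix (Fin n) (Fin n) ℝ := star U * A * U with hA'
  -- conjugation facts
  have hconj : ∀ (M : Matrix (Fin n) (Fin n) ℝ), M.PosSemidef →
      (star U * M * U).PosSemidef := by
    intro M hM
    have := hM.conjTranspose_mul_mul_same U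
    rwa [← Matrix.star_eq_conjTranspose] at this
  have hsmul1 : ∀ (r : ℝ), star U * (r • (1 : Matrix (Fin n) (Fin n) ℝ)) * U
      = r • (1 : Matrix (Fin n) (Fin n) ℝ) := by
    intro r
    rw [Matrix.mul_smul, Matrix.mul_one, Matrix.smul_mul, hUU]
  -- lower bound for diagonal entries of A'
  have hd_lo : ∀ i, 1 / c₁ ≤ A' i i := by
    intro i
    have h1 : (star U * (A - (1 / c₁) • 1) * U).PosSemidef := hconj _ hA_lower
    have h2 : star U * (A - (1 / c₁) • 1) * U = A' - (1 / c₁) • 1 := by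
      rw [Matrix.mul_sub, Matrix.sub_mul, hsmul1, hA']
    rw [h2] at h1
    have := diag_nonneg _ h1 i
    simp [Matrix.sub_apply, Matrix.smul_apply, Matrix.one_apply, one_div] at this
    rw [one_div]
    linarith
  have hd_hi : ∀ i, A' i i ≤ c₂ := by
    intro i
    have h1 : (star U * (c₂ • 1 - A) * U).PosSemidef := hconj _ hA_upper
    have h2 : star U * (c₂ • 1 - A) * U = c₂ • 1 - A' := by
      rw [Matrix.mul_sub, Matrix.sub_mul, hsmul1, hA']
    rw [h2] at h1
    have := diag_nonneg _ h1 i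
    simp [Matrix.sub_apply, Matrix.smul_apply, Matrix.one_apply] at this
    linarith
  -- lower bound for μ
  have hμ_lo : ∀ i, -c₃ ≤ μ i := by
    intro i
    have h1 : (star U * (B + c₃ • 1) * U).PosSemidef := hconj _ hB_lower
    have h2 : star U * (B + c₃ • 1) * U = diagonal μ + c₃ • 1 := by
      rw [Matrix.mul_add, Matrix.add_mul, hsmul1]
      congr 1
      rw [← hdiagμ]
      exact hB.conjStarAlgAut_star_eigenvectorUnitary
    rw [h2] at h1
    have := diag_nonneg _ h1 i
    simp [Matrix.add_apply, Matrix.smul_apply, Matrix.one_apply, Matrix.diagonal_apply_eq] at this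
    linarith
  -- trace identity
  have htr : ∑ i, A' i i * μ i ≤ c₄ := by
    have : (A * B).trace = ∑ i, A' i i * μ i := by
      conv_lhs => rw [hspec]
      rw [← Matrix.mul_assoc, ← Matrix.mul_assoc,
        Matrix.trace_mul_comm (A * U * diagonal μ) (star U),
        ← Matrix.mul_assoc, ← Matrix.mul_assoc, ← hA']
      simp [Matrix.trace, Matrix.diag, Matrix.mul_diagonal]
    linarith [this ▸ htrace]
  -- each eigenvalue is bounded
  set c : ℝ := c₁ * (((n : ℝ) - 1) * c₂ * c₃ + c₄) with hc
  have hμ_hi : ∀ i, μ i ≤ c := by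
    intro i
    have hn1 : (1 : ℝ) ≤ (n : ℝ) := by exact_mod_cast Nat.one_le_iff_ne_zero.mpr (by
      rintro rfl; exact (Fin.elim0 i))
    have hterm : ∀ j, -(c₂ * c₃) ≤ A' j j * μ j := by
      intro j
      rcases le_or_gt 0 (μ j) with h | h
      · nlinarith [hd_lo j, hd_hi j, one_div_pos.mpr hc₁]
      · nlinarith [hd_hi j, hμ_lo j, hd_lo j, one_div_pos.mpr hc₁]
    have hrest : -(((n : ℝ) - 1) * (c₂ * c₃)) ≤ ∑ j ∈ Finset.univ.erase i, A' j j * μ j := by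
      have hcard : ((Finset.univ.erase i).card : ℝ) = (n : ℝ) - 1 := by
        rw [Finset.card_erase_of_mem (Finset.mem_univ i)]
        simp
        rw [Nat.cast_sub (by exact_mod_cast hn1)]
        simp
      calc -(((n : ℝ) - 1) * (c₂ * c₃))
          = ∑ _j ∈ Finset.univ.erase i, -(c₂ * c₃) := by
            rw [Finset.sum_const, nsmul_eq_mul, hcard]; ring
        _ ≤ _ := Finset.sum_le_sum fun j _ => hterm j
    have hsplit : A' i i * μ i + ∑ j ∈ Finset.univ.erase i, A' j j * μ j
        = ∑ j, A' j j * μ j :=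
      Finset.add_sum_erase Finset.univ (fun j => A' j j * μ j) (Finset.mem_univ i)
    have hkey : A' i i * μ i ≤ ((n : ℝ) - 1) * c₂ * c₃ + c₄ := by
      nlinarith [htr]
    rcases le_or_gt (μ i) 0 with h | h
    · have hnn : 0 ≤ ((n : ℝ) - 1) * c₂ * c₃ :=
        mul_nonneg (mul_nonneg (by linarith) hc₂.le) hc₃.le
      have : 0 < c := mul_pos hc₁ (by linarith)
      linarith
    · have h1 : (1 / c₁) * μ i ≤ A' i i * μ i :=
        mul_le_mul_of_nonneg_right (hd_lo i) h.le
      have : μ i = c₁ * ((1 / c₁) * μ i) := by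
        field_simp
      rw [this, hc]
      apply mul_le_mul_of_nonneg_left _ hc₁.le
      linarith
  -- conclude
  have hgoal : c • (1 : Matrix (Fin n) (Fin n) ℝ) - B
      = U * diagonal (fun i => c - μ i) * star U := by
    have h1 : U * (c • (1 : Matrix (Fin n) (Fin n) ℝ)) * star U = c • 1 := by
      rw [Matrix.mul_smul, Matrix.mul_one, Matrix.smul_mul, hUU']
    have h2 : diagonal (fun i => c - μ i) = c • (1 : Matrix (Fin n) (Fin n) ℝ) - diagonal μ := by
      rw [Matrix.smul_one_eq_diagonal, ← Matrix.diagonal_sub]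
    rw [h2, Matrix.mul_sub, Matrix.sub_mul, h1, ← hspec]
  rw [hgoal]
  have hdpsd : (diagonal (fun i => c - μ i)).PosSemidef :=
    Matrix.PosSemidef.diagonal fun i => by have := hμ_hi i; simp; linarith
  have := hdpsd.mul_mul_conjTranspose_same U
  rwa [← Matrix.star_eq_conjTranspose] at this
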